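/- arXiv:2107.03273 — 3 statements merged into one kernel-verified Lean document; each statement's English description precedes it below -/
import Mathlib

section
/- Let E and F be Polish spaces, (Ω,𝓕,ℙ) a probability space, and η : Ω → C([0,T];E) and X : Ω → C([0,T];F) measurable maps. Let P : C([0,T];E) → 𝒫(C([0,T];F)), e ↦ P^e, be Borel measurable and non-anticipative, meaning: for every t ∈ [0,T] and all e, e' ∈ C([0,T];E) with e_s = e'_s for all s ∈ [0,t], the measures P^e and P^{e'} agree on 𝓑_t^F. Assume that P^η is a version of the conditional law of X given σ(η), i.e., for every Borel set C ⊆ C([0,T];F), ℙ(X ∈ C | σ(η)) = P^η(C) almost surely. Then for every t ∈ [0,T], the σ-algebras 𝓕^X_t := X^{-1}(𝓑_t^F) and σ(η) are conditionally independent given 𝓕^η_t := η^{-1}(𝓑_t^E). -/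
open MeasureTheory Set

noncomputable section

/-- Conditional independence of two sub-σ-algebras `mA`, `mB` given a third one `mC`:
`E[ξζ | mC] = E[ξ | mC]·E[ζ | mC]` a.s. for all bounded `mA`-measurable `ξ` and bounded
`mB`-measurable `ζ`. -/
def CondIndepSigmaAlgebras {Ω : Type*} [MeasurableSpace Ω] (ℙ : Measure Ω)
    (mA mB mC : MeasurableSpace Ω) : Prop :=
  ∀ ξ ζ : Ω → ℝ, Measurable[mA] ξ → Measurable[mB] ζ →
    (∃ C : ℝ, ∀ ω, |ξ ω| ≤ C) → (∃ C : ℝ, ∀ ω, |ζ ω| ≤ C) →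
    MeasureTheory.condExp mC ℙ (fun ω => ξ ω * ζ ω) =ᵐ[ℙ]
      fun ω => MeasureTheory.condExp mC ℙ ξ ω * MeasureTheory.condExp mC ℙ ζ ω

/-- The canonical filtration `𝓑_t` on path space `C([0,T];E)`, generated by the
evaluation maps at times `s ≤ t`. -/
def pathFiltration (T : ℝ) (E : Type*) [TopologicalSpace E] [MeasurableSpace E] (t : ℝ) :
    MeasurableSpace C(Icc (0 : ℝ) T, E) :=
  ⨆ (s : Icc (0 : ℝ) T) (_ : (s : ℝ) ≤ t),
    MeasurableSpace.comap (fun x => x s) inferInstance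


open scoped ENNReal



lemma doobDynkin_ennreal {α β : Type*} {m : MeasurableSpace β} {X : α → β} {ξ : α → ℝ≥0∞}
    (hξ : Measurable[m.comap X] ξ) :
    ∃ f : β → ℝ≥0∞, Measurable[m] f ∧ ∀ a, f (X a) = ξ a := by
  have hsets : ∀ q : ℚ, ∃ B : Set β, MeasurableSet[m] B ∧
      X ⁻¹' B = {a | ENNReal.ofReal q < ξ a} := by
    intro q
    have : MeasurableSet[m.comap X] {a | ENNReal.ofReal q < ξ a} :=
      hξ measurableSet_Ioi
    exact this
  choose B hB hBX using hsets
  refine ⟨fun y => ⨆ q : ℚ, (B q).indicator (fun _ => ENNReal.ofReal q) y, ?_, ?_⟩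
  · exact Measurable.iSup fun q => Measurable.indicator measurable_const (hB q)
  · intro a
    have hmem : ∀ q : ℚ, X a ∈ B q ↔ ENNReal.ofReal q < ξ a := by
      intro q
      constructor
      · intro h; have : a ∈ X ⁻¹' B q := h
        rw [hBX q] at this; exact this
      · intro h; have : a ∈ X ⁻¹' B q := by rw [hBX q]; exact h
        exact this
    apply le_antisymm
    · refine iSup_le fun q => ?_
      by_cases h : X a ∈ B q
      · rw [Set.indicator_of_mem h]
        exact ((hmem q).1 h).le
      · rw [Set.indicator_of_notMem h]; exact zero_le'
    · by_contra hc
      push_neg at hc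
      obtain ⟨q, _, h1, h2⟩ := ENNReal.lt_iff_exists_rat_btwn.1 hc
      have hq : ENNReal.ofReal q < ξ a := h2
      have hXa : X a ∈ B q := (hmem q).2 hq
      have : ENNReal.ofReal q ≤ ⨆ q : ℚ, (B q).indicator (fun _ => ENNReal.ofReal q) (X a) := by
        refine le_trans ?_ (le_iSup _ q)
        rw [Set.indicator_of_mem hXa]
      exact absurd (lt_of_lt_of_le h1 this) (lt_irrefl _)

lemma doobDynkin_real {α β : Type*} {m : MeasurableSpace β} {X : α → β} {ξ : α → ℝ} {C : ℝ}
    (hC : 0 ≤ C) (hξ : Measurable[m.comap X] ξ) (hb : ∀ a, |ξ a| ≤ C) :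
    ∃ f : β → ℝ, Measurable[m] f ∧ (∀ y, |f y| ≤ C) ∧ ∀ a, f (X a) = ξ a := by
  have hξ' : Measurable[m.comap X] fun a => ENNReal.ofReal (ξ a + C) :=
    (hξ.add_const C).ennreal_ofReal
  obtain ⟨F, hF, hFX⟩ := doobDynkin_ennreal hξ'
  refine ⟨fun y => max (-C) (min C ((F y).toReal - C)), ?_, ?_, ?_⟩
  · exact (measurable_const.max ((measurable_const.min
      ((hF.ennreal_toReal).sub measurable_const))))
  · intro y
    rw [abs_le]
    constructor
    · exact le_max_left _ _
    · exact max_le (by linarith) (min_le_left _ _)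
  · intro a
    have h1 : (F (X a)).toReal = ξ a + C := by
      rw [hFX a, ENNReal.toReal_ofReal]
      have := (abs_le.1 (hb a)).1; linarith
    show max (-C) (min C ((F (X a)).toReal - C)) = ξ a
    rw [h1]
    have h2 := abs_le.1 (hb a)
    rw [show ξ a + C - C = ξ a by ring, min_eq_right h2.2, max_eq_right (by linarith [h2.1])]



lemma borel_le_iSup_comap_eval (T : ℝ) (E : Type) [TopologicalSpace E] [PolishSpace E]
    [MeasurableSpace E] [BorelSpace E]
    [MeasurableSpace C(Icc (0 : ℝ) T, E)] [BorelSpace C(Icc (0 : ℝ) T, E)] :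
    (inferInstance : MeasurableSpace C(Icc (0 : ℝ) T, E)) ≤
      ⨆ s : Icc (0 : ℝ) T,
        MeasurableSpace.comap (fun x : C(Icc (0 : ℝ) T, E) => x s) inferInstance := by
  have h0 : (inferInstance : MeasurableSpace C(Icc (0 : ℝ) T, E)) =
      MeasurableSpace.generateFrom {U : Set C(Icc (0 : ℝ) T, E) | IsOpen U} := by
    rw [BorelSpace.measurable_eq (α := C(Icc (0 : ℝ) T, E))]; rfl
  letI := TopologicalSpace.upgradeIsCompletelyMetrizable E
  set m : MeasurableSpace C(Icc (0 : ℝ) T, E) :=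
    ⨆ s : Icc (0 : ℝ) T,
      MeasurableSpace.comap (fun x : C(Icc (0 : ℝ) T, E) => x s) inferInstance with hm
  -- closed balls are m-measurable
  have hcb : ∀ (y : C(Icc (0 : ℝ) T, E)) (r : ℝ), 0 ≤ r →
      MeasurableSet[m] {x | dist x y ≤ r} := by
    intro y r hr
    obtain ⟨D, hDc, hDd⟩ := TopologicalSpace.exists_countable_dense (Icc (0 : ℝ) T)
    have heq : {x : C(Icc (0 : ℝ) T, E) | dist x y ≤ r} =
        ⋂ s ∈ D, (fun x : C(Icc (0 : ℝ) T, E) => x s) ⁻¹' Metric.closedBall (y s) r := by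
      ext x
      simp only [mem_setOf_eq, mem_iInter, mem_preimage, Metric.mem_closedBall]
      constructor
      · intro h s _
        exact (ContinuousMap.dist_apply_le_dist s).trans h
      · intro h
        rw [ContinuousMap.dist_le hr]
        intro s
        have hclosed : IsClosed {s : Icc (0 : ℝ) T | dist (x s) (y s) ≤ r} :=
          isClosed_le (Continuous.dist (map_continuous x) (map_continuous y)) continuous_const
        have hsub : closure D ⊆ {s : Icc (0 : ℝ) T | dist (x s) (y s) ≤ r} :=
          closure_minimal (fun s hs => h s hs) hclosed
        have : s ∈ closure D := by rw [hDd.closure_eq]; exact mem_univ s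
        exact hsub this
    rw [heq]
    refine MeasurableSet.biInter hDc fun s _ => ?_
    have : MeasurableSet[MeasurableSpace.comap
        (fun x : C(Icc (0 : ℝ) T, E) => x s) inferInstance]
        ((fun x : C(Icc (0 : ℝ) T, E) => x s) ⁻¹' Metric.closedBall (y s) r) :=
      ⟨Metric.closedBall (y s) r, measurableSet_closedBall, rfl⟩
    exact le_iSup (fun s : Icc (0 : ℝ) T =>
      MeasurableSpace.comap (fun x : C(Icc (0 : ℝ) T, E) => x s) inferInstance) s _ this
  -- open balls are m-measurable
  have hob : ∀ (y : C(Icc (0 : ℝ) T, E)) (r : ℝ), MeasurableSet[m] (Metric.ball y r) := by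
    intro y r
    have heq : Metric.ball y r =
        ⋃ q ∈ {q : ℚ | 0 ≤ (q : ℝ) ∧ (q : ℝ) < r}, {x | dist x y ≤ (q : ℝ)} := by
      ext x
      simp only [Metric.mem_ball, mem_iUnion, mem_setOf_eq, exists_prop]
      constructor
      · intro h
        obtain ⟨q, hq1, hq2⟩ := exists_rat_btwn h
        exact ⟨q, ⟨dist_nonneg.trans hq1.le, hq2⟩, hq1.le⟩
      · rintro ⟨q, ⟨_, hq2⟩, h⟩
        exact lt_of_le_of_lt h hq2
    rw [heq]
    exact MeasurableSet.biUnion (Set.to_countable _) fun q hq => hcb y q hq.1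
  -- every open set is m-measurable
  have hopen : ∀ U : Set C(Icc (0 : ℝ) T, E), IsOpen U → MeasurableSet[m] U := by
    intro U hU
    obtain ⟨Dc, hDcc, hDcd⟩ := TopologicalSpace.exists_countable_dense C(Icc (0 : ℝ) T, E)
    have heq : U = ⋃ p ∈ {p : C(Icc (0 : ℝ) T, E) × ℚ |
        p.1 ∈ Dc ∧ Metric.ball p.1 (p.2 : ℝ) ⊆ U}, Metric.ball p.1 (p.2 : ℝ) := by
      ext x
      simp only [mem_iUnion, mem_setOf_eq, exists_prop, Prod.exists]
      constructor
      · intro hx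
        obtain ⟨ε, hε, hball⟩ := Metric.isOpen_iff.1 hU x hx
        obtain ⟨z, hz, hdz⟩ := hDcd.exists_dist_lt x (by positivity : (0:ℝ) < ε / 3)
        have hlt : dist x z < ε - dist x z := by
          have := dist_nonneg (x := x) (y := z); linarith
        obtain ⟨q, hq1, hq2⟩ := exists_rat_btwn hlt
        refine ⟨z, q, ⟨hz, ?_⟩, ?_⟩
        · intro w hw
          apply hball
          have : dist w x ≤ dist w z + dist z x := dist_triangle w z x
          have hzx : dist z x = dist x z := dist_comm z x
          simp only [Metric.mem_ball] at hw ⊢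
          calc dist w x ≤ dist w z + dist z x := dist_triangle w z x
            _ < (q : ℝ) + dist z x := by linarith
            _ < (ε - dist x z) + dist x z := by rw [hzx]; linarith
            _ = ε := by ring
        · exact Metric.mem_ball.mpr hq1
      · rintro ⟨z, q, ⟨_, hsub⟩, hx⟩
        exact hsub hx
    rw [heq]
    have hcnt : Set.Countable {p : C(Icc (0 : ℝ) T, E) × ℚ |
        p.1 ∈ Dc ∧ Metric.ball p.1 (p.2 : ℝ) ⊆ U} := by
      refine Set.Countable.mono ?_ (hDcc.prod (Set.to_countable (univ : Set ℚ)))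
      rintro ⟨z, q⟩ ⟨h1, _⟩
      exact ⟨h1, mem_univ _⟩
    exact MeasurableSet.biUnion hcnt fun p _ => hob p.1 p.2
  rw [h0]
  exact MeasurableSpace.generateFrom_le fun U hU => hopen U hU


/-- If the conditional law of `X` given `η` is given by a non-anticipative Borel kernel
`e ↦ P^e`, then `𝓕^X_t` and `σ(η)` are conditionally independent given `𝓕^η_t`. -/
theorem nonanticipative_kernel_conditional_independence
    {T : ℝ} (hT : 0 < T)
    {E F : Type} [TopologicalSpace E] [PolishSpace E] [MeasurableSpace E] [BorelSpace E]
    [TopologicalSpace F] [PolishSpace F] [MeasurableSpace F] [BorelSpace F]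
    [MeasurableSpace C(Icc (0 : ℝ) T, E)] [BorelSpace C(Icc (0 : ℝ) T, E)]
    [MeasurableSpace C(Icc (0 : ℝ) T, F)] [BorelSpace C(Icc (0 : ℝ) T, F)]
    {Ω : Type} [MeasurableSpace Ω] (ℙ : Measure Ω) [IsProbabilityMeasure ℙ]
    (η : Ω → C(Icc (0 : ℝ) T, E)) (hη : Measurable η)
    (X : Ω → C(Icc (0 : ℝ) T, F)) (hX : Measurable X)
    (P : C(Icc (0 : ℝ) T, E) → Measure C(Icc (0 : ℝ) T, F))
    (hPprob : ∀ e, IsProbabilityMeasure (P e))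
    (hPmeas : Measurable P)
    -- non-anticipativity: P^e and P^{e'} agree on 𝓑_t^F whenever e = e' on [0,t]
    (hPnonant : ∀ t ∈ Icc (0 : ℝ) T, ∀ e e' : C(Icc (0 : ℝ) T, E),
      (∀ s : Icc (0 : ℝ) T, (s : ℝ) ≤ t → e s = e' s) →
      ∀ C : Set C(Icc (0 : ℝ) T, F), MeasurableSet[pathFiltration T F t] C →
        P e C = P e' C)
    -- P^η is a version of the conditional law of X given σ(η)
    (hcondlaw : ∀ C : Set C(Icc (0 : ℝ) T, F), MeasurableSet C →
      (fun ω => ((P (η ω)) C).toReal) =ᵐ[ℙ]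
        MeasureTheory.condExp (MeasurableSpace.comap η inferInstance) ℙ
          ((X ⁻¹' C).indicator fun _ => (1 : ℝ))) :
    ∀ t ∈ Icc (0 : ℝ) T,
      CondIndepSigmaAlgebras ℙ
        (MeasurableSpace.comap X (pathFiltration T F t))
        (MeasurableSpace.comap η inferInstance)
        (MeasurableSpace.comap η (pathFiltration T E t)) := by
  intro t ht
  unfold CondIndepSigmaAlgebras
  intro ξ ζ hξ hζ hbξ hbζ
  obtain ⟨Cξ, hCξ⟩ := hbξ
  obtain ⟨Cζ, hCζ⟩ := hbζ
  -- nonempty Ω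
  haveI hΩne : Nonempty Ω := by
    by_contra h
    rw [not_nonempty_iff] at h
    have h1 := measure_univ (μ := ℙ)
    rw [Set.univ_eq_empty_iff.2 h, measure_empty] at h1
    exact zero_ne_one h1
  haveI : PolishSpace C(Icc (0 : ℝ) T, F) := by
    letI := TopologicalSpace.upgradeIsCompletelyMetrizable F
    infer_instance
  haveI : StandardBorelSpace C(Icc (0 : ℝ) T, F) := inferInstance
  haveI : Nonempty C(Icc (0 : ℝ) T, F) := ⟨X (Classical.arbitrary Ω)⟩
  -- σ-algebras
  have hFE_le : pathFiltration T E t ≤ (inferInstance : MeasurableSpace C(Icc (0 : ℝ) T, E)) :=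
    iSup₂_le fun s _ => (continuous_eval_const s).measurable.comap_le
  have hFF_le : pathFiltration T F t ≤ (inferInstance : MeasurableSpace C(Icc (0 : ℝ) T, F)) :=
    iSup₂_le fun s _ => (continuous_eval_const s).measurable.comap_le
  have hB_le : (MeasurableSpace.comap η (inferInstance : MeasurableSpace C(Icc (0 : ℝ) T, E))) ≤ ‹MeasurableSpace Ω› := hη.comap_le
  have hCB : (MeasurableSpace.comap η (pathFiltration T E t)) ≤ (MeasurableSpace.comap η (inferInstance : MeasurableSpace C(Icc (0 : ℝ) T, E))) := MeasurableSpace.comap_mono hFE_le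
  have hC_le : (MeasurableSpace.comap η (pathFiltration T E t)) ≤ ‹MeasurableSpace Ω› := hCB.trans hB_le
  have hA_le : MeasurableSpace.comap X (pathFiltration T F t) ≤ ‹MeasurableSpace Ω› :=
    (MeasurableSpace.comap_mono hFF_le).trans hX.comap_le
  haveI : SigmaFinite (ℙ.trim hB_le) := by
    haveI : IsFiniteMeasure (ℙ.trim hB_le) := isFiniteMeasure_trim hB_le
    infer_instance
  haveI : SigmaFinite (ℙ.trim hC_le) := by
    haveI : IsFiniteMeasure (ℙ.trim hC_le) := isFiniteMeasure_trim hC_le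
    infer_instance
  -- integrability helper
  have hint : ∀ (h : Ω → ℝ) (C : ℝ), AEStronglyMeasurable h ℙ → (∀ ω, |h ω| ≤ C) →
      Integrable h ℙ := fun h C hm hb =>
    ⟨hm, HasFiniteIntegral.of_bounded (C := C)
      (Filter.Eventually.of_forall fun ω => by simpa [Real.norm_eq_abs] using hb ω)⟩
  have hCξ0 : 0 ≤ Cξ := le_trans (abs_nonneg _) (hCξ (Classical.arbitrary Ω))
  have hCζ0 : 0 ≤ Cζ := le_trans (abs_nonneg _) (hCζ (Classical.arbitrary Ω))
  have hξ_meas : Measurable ξ := hξ.mono hA_le le_rfl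
  have hζ_meas : Measurable ζ := hζ.mono hB_le le_rfl
  have hξ_int : Integrable ξ ℙ := hint ξ Cξ hξ_meas.aestronglyMeasurable hCξ
  have hζ_int : Integrable ζ ℙ := hint ζ Cζ hζ_meas.aestronglyMeasurable hCζ
  -- kernel
  set κ : ProbabilityTheory.Kernel C(Icc (0 : ℝ) T, E) C(Icc (0 : ℝ) T, F) :=
    ⟨P, hPmeas⟩ with hκdef
  haveI : ProbabilityTheory.IsMarkovKernel κ := ⟨hPprob⟩
  have hκapp : ∀ e, κ e = P e := fun e => rfl
  haveI : IsProbabilityMeasure (ℙ.map η) := Measure.isProbabilityMeasure_map hη.aemeasurable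
  haveI : IsProbabilityMeasure (ℙ.map (fun ω => (η ω, X ω))) :=
    Measure.isProbabilityMeasure_map (hη.prodMk hX).aemeasurable
  -- the law of (η, X) disintegrates through the kernel κ
  have hmap_eq : ℙ.map (fun ω => (η ω, X ω)) = (ℙ.map η).compProd κ := by
    refine ext_of_generate_finite _ generateFrom_prod.symm isPiSystem_prod ?_ ?_
    · rintro - ⟨s, hs, u, hu, rfl⟩
      simp only [Set.mem_setOf_eq] at hs hu
      rw [Measure.map_apply (hη.prodMk hX) (hs.prod hu), Set.mk_preimage_prod,
        Measure.compProd_apply_prod hs hu,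
        setLIntegral_map hs (ProbabilityTheory.Kernel.measurable_coe κ hu) hη]
      -- goal : ℙ (η ⁻¹' s ∩ X ⁻¹' u) = ∫⁻ ω in η ⁻¹' s, κ (η ω) u ∂ℙ
      have hAs : MeasurableSet[(MeasurableSpace.comap η (inferInstance : MeasurableSpace C(Icc (0 : ℝ) T, E)))] (η ⁻¹' s) := ⟨s, hs, rfl⟩
      have hind_int : Integrable ((X ⁻¹' u).indicator fun _ => (1 : ℝ)) ℙ :=
        (integrable_const (1 : ℝ)).indicator (hX hu)
      have e1 : ∫ ω in η ⁻¹' s, ((X ⁻¹' u).indicator (fun _ => (1 : ℝ))) ω ∂ℙ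
          = (ℙ (η ⁻¹' s ∩ X ⁻¹' u)).toReal := by
        rw [setIntegral_indicator (hX hu), setIntegral_const]
        simp [Measure.real]
      have e2 : ∫ ω in η ⁻¹' s,
            (MeasureTheory.condExp (MeasurableSpace.comap η (inferInstance : MeasurableSpace C(Icc (0 : ℝ) T, E))) ℙ ((X ⁻¹' u).indicator fun _ => (1 : ℝ))) ω ∂ℙ
          = ∫ ω in η ⁻¹' s, ((X ⁻¹' u).indicator fun _ => (1 : ℝ)) ω ∂ℙ :=
        setIntegral_condExp hB_le hind_int hAs
      have e3 : ∫ ω in η ⁻¹' s, (P (η ω) u).toReal ∂ℙ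
          = ∫ ω in η ⁻¹' s,
            (MeasureTheory.condExp (MeasurableSpace.comap η (inferInstance : MeasurableSpace C(Icc (0 : ℝ) T, E))) ℙ ((X ⁻¹' u).indicator fun _ => (1 : ℝ))) ω ∂ℙ :=
        integral_congr_ae (ae_restrict_of_ae (hcondlaw u hu))
      have e4 : ∫ ω in η ⁻¹' s, (P (η ω) u).toReal ∂ℙ
          = (∫⁻ ω in η ⁻¹' s, P (η ω) u ∂ℙ).toReal := by
        refine integral_toReal (((ProbabilityTheory.Kernel.measurable_coe κ hu).comp
          hη).aemeasurable) ?_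
        refine Filter.Eventually.of_forall fun ω => ?_
        haveI := hPprob (η ω)
        exact measure_lt_top _ _
      have hne1 : ℙ (η ⁻¹' s ∩ X ⁻¹' u) ≠ ⊤ := measure_ne_top _ _
      have hle : ∫⁻ ω in η ⁻¹' s, P (η ω) u ∂ℙ ≤ 1 := by
        calc ∫⁻ ω in η ⁻¹' s, P (η ω) u ∂ℙ ≤ ∫⁻ _ in η ⁻¹' s, 1 ∂ℙ := by
              refine lintegral_mono fun ω => ?_
              haveI := hPprob (η ω)
              exact prob_le_one
          _ = ℙ (η ⁻¹' s) := setLIntegral_one _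
          _ ≤ 1 := prob_le_one
      have hne2 : ∫⁻ ω in η ⁻¹' s, P (η ω) u ∂ℙ ≠ ⊤ :=
        (lt_of_le_of_lt hle ENNReal.one_lt_top).ne
      refine (ENNReal.toReal_eq_toReal_iff' hne1 hne2).1 ?_
      rw [← e1, ← e2, ← e3, e4]
    · rw [← Set.univ_prod_univ, Measure.map_apply (hη.prodMk hX)
        (MeasurableSet.univ.prod MeasurableSet.univ),
        Measure.compProd_apply_prod MeasurableSet.univ MeasurableSet.univ]
      simp [measure_univ]
  have hae : ∀ᵐ ω ∂ℙ, P (η ω) = ProbabilityTheory.condDistrib X η ℙ (η ω) := by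
    have h := ProbabilityTheory.condDistrib_ae_eq_of_measure_eq_compProd_of_measurable hη hX (κ := κ) hmap_eq
    exact (ae_of_ae_map hη.aemeasurable h).mono fun _ h => h.symm
  -- Doob–Dynkin factorization of ξ through X
  obtain ⟨f, hf_t, hf_bdd, hfX⟩ := doobDynkin_real (C := max Cξ 0) (le_max_right _ _) hξ
    (fun a => le_trans (hCξ a) (le_max_left _ _))
  have hf_meas : Measurable f := hf_t.mono hFF_le le_rfl
  -- kernel integral of f
  set g : C(Icc (0 : ℝ) T, E) → ℝ := fun e => ∫ y, f y ∂(P e) with hgdef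
  have hg_borel : Measurable g := by
    have hsm : StronglyMeasurable (Function.uncurry
        fun (_ : C(Icc (0 : ℝ) T, E)) (y : C(Icc (0 : ℝ) T, F)) => f y) :=
      hf_meas.stronglyMeasurable.comp_measurable measurable_snd
    exact (MeasureTheory.StronglyMeasurable.integral_kernel_prod_right (κ := κ) hsm).measurable
  have hg_bdd : ∀ e, |g e| ≤ max Cξ 0 := by
    intro e
    haveI := hPprob e
    have h := norm_integral_le_of_norm_le_const (μ := P e) (f := f) (C := max Cξ 0)
      (Filter.Eventually.of_forall fun y => by simpa [Real.norm_eq_abs] using hf_bdd y)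
    simpa [Real.norm_eq_abs, measure_univ] using h
  -- the stopping map
  have hθcont : Continuous fun s : Icc (0 : ℝ) T =>
      (⟨min (s : ℝ) t, ⟨le_min s.2.1 ht.1, le_trans (min_le_left _ _) s.2.2⟩⟩ : Icc (0 : ℝ) T) :=
    Continuous.subtype_mk (continuous_subtype_val.min continuous_const) _
  set θ : C(Icc (0 : ℝ) T, Icc (0 : ℝ) T) := ⟨_, hθcont⟩ with hθdef
  set R : C(Icc (0 : ℝ) T, E) → C(Icc (0 : ℝ) T, E) := fun e => e.comp θ with hRdef
  have hgR : ∀ e, g (R e) = g e := by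
    intro e
    have hagree : ∀ s : Icc (0 : ℝ) T, (s : ℝ) ≤ t → e s = (R e) s := by
      intro s hs
      show e s = e (θ s)
      congr 1
      exact Subtype.ext (min_eq_left hs).symm
    have htrim : (P (R e)).trim hFF_le = (P e).trim hFF_le := by
      refine @Measure.ext _ (pathFiltration T F t) _ _ fun u hu => ?_
      rw [trim_measurableSet_eq hFF_le hu, trim_measurableSet_eq hFF_le hu]
      exact (hPnonant t ht e (R e) hagree u hu).symm
    calc g (R e) = ∫ y, f y ∂((P (R e)).trim hFF_le) :=
          integral_trim hFF_le hf_t.stronglyMeasurable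
      _ = ∫ y, f y ∂((P e).trim hFF_le) := by rw [htrim]
      _ = g e := (integral_trim hFF_le hf_t.stronglyMeasurable).symm
  have hgt : Measurable[pathFiltration T E t] g := by
    have hR_meas : @Measurable _ _ (pathFiltration T E t) _ R := by
      rw [measurable_iff_comap_le]
      calc MeasurableSpace.comap R inferInstance
          ≤ MeasurableSpace.comap R (⨆ s : Icc (0 : ℝ) T,
              MeasurableSpace.comap (fun x : C(Icc (0 : ℝ) T, E) => x s) inferInstance) :=
            MeasurableSpace.comap_mono (borel_le_iSup_comap_eval T E)
        _ = ⨆ s : Icc (0 : ℝ) T, MeasurableSpace.comap R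
              (MeasurableSpace.comap (fun x : C(Icc (0 : ℝ) T, E) => x s) inferInstance) :=
            MeasurableSpace.comap_iSup
        _ ≤ pathFiltration T E t := by
            refine iSup_le fun s => ?_
            rw [MeasurableSpace.comap_comp]
            exact le_iSup₂ (f := fun (u : Icc (0 : ℝ) T) (_ : (u : ℝ) ≤ t) =>
              MeasurableSpace.comap (fun x : C(Icc (0 : ℝ) T, E) => x u) inferInstance)
              (θ s) (min_le_right _ _)
    have hgeq : g = fun e => g (R e) := funext fun e => (hgR e).symm
    rw [hgeq]
    exact hg_borel.comp hR_meas
  -- the candidate conditional expectation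
  set G : Ω → ℝ := fun ω => g (η ω) with hGdef
  have hη_mC : @Measurable Ω _ (MeasurableSpace.comap η (pathFiltration T E t)) (pathFiltration T E t) η := Measurable.of_comap_le le_rfl
  have hG_mC : Measurable[(MeasurableSpace.comap η (pathFiltration T E t))] G := hgt.comp hη_mC
  have hG_bdd : ∀ ω, |G ω| ≤ max Cξ 0 := fun ω => hg_bdd _
  have hG_int : Integrable G ℙ := hint G (max Cξ 0)
    ((hG_mC.mono hC_le le_rfl).aestronglyMeasurable) hG_bdd
  -- E[ξ | σ(η)] = G a.s.
  have hξeq : ξ = fun ω => f (X ω) := funext fun a => (hfX a).symm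
  have hfX_int : Integrable (fun a => f (X a)) ℙ := hint _ (max Cξ 0)
    ((hf_meas.comp hX).aestronglyMeasurable) (fun ω => hf_bdd _)
  have claim1 : MeasureTheory.condExp (MeasurableSpace.comap η (inferInstance : MeasurableSpace C(Icc (0 : ℝ) T, E))) ℙ ξ =ᵐ[ℙ] G := by
    have h1 := ProbabilityTheory.condExp_ae_eq_integral_condDistrib (μ := ℙ) (X := η)
      hη hX.aemeasurable hf_meas.stronglyMeasurable hfX_int
    have h2 : (fun a => ∫ y, f y ∂(ProbabilityTheory.condDistrib X η ℙ (η a))) =ᵐ[ℙ] G := by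
      filter_upwards [hae] with ω hω
      show _ = g (η ω)
      rw [hgdef]
      simp only []
      rw [← hω]
    rw [hξeq]
    exact h1.trans h2
  -- E[ξ | 𝓕ᵗ_η] = G a.s.
  have hstar : MeasureTheory.condExp (MeasurableSpace.comap η (pathFiltration T E t)) ℙ ξ =ᵐ[ℙ] G := by
    have h1 : MeasureTheory.condExp (MeasurableSpace.comap η (pathFiltration T E t)) ℙ ξ
        =ᵐ[ℙ] MeasureTheory.condExp (MeasurableSpace.comap η (pathFiltration T E t)) ℙ (MeasureTheory.condExp (MeasurableSpace.comap η (inferInstance : MeasurableSpace C(Icc (0 : ℝ) T, E))) ℙ ξ) :=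
      (condExp_condExp_of_le hCB hB_le).symm
    have h2 : MeasureTheory.condExp (MeasurableSpace.comap η (pathFiltration T E t)) ℙ (MeasureTheory.condExp (MeasurableSpace.comap η (inferInstance : MeasurableSpace C(Icc (0 : ℝ) T, E))) ℙ ξ)
        =ᵐ[ℙ] MeasureTheory.condExp (MeasurableSpace.comap η (pathFiltration T E t)) ℙ G := condExp_congr_ae claim1
    have h3 : MeasureTheory.condExp (MeasurableSpace.comap η (pathFiltration T E t)) ℙ G = G :=
      condExp_of_stronglyMeasurable hC_le hG_mC.stronglyMeasurable hG_int
    exact (h1.trans h2).trans (by rw [h3])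
  -- conclusion
  have hmul1 : (fun ω => ξ ω * ζ ω) = ζ * ξ := funext fun ω => mul_comm _ _
  have hζξ_int : Integrable (ζ * ξ) ℙ := by
    refine hint _ (Cζ * Cξ) ((hζ_meas.mul hξ_meas).aestronglyMeasurable) fun ω => ?_
    show |ζ ω * ξ ω| ≤ Cζ * Cξ
    rw [abs_mul]
    exact mul_le_mul (hCζ ω) (hCξ ω) (abs_nonneg _) hCζ0
  have hGζ_int : Integrable (G * ζ) ℙ := by
    refine hint _ (max Cξ 0 * Cζ)
      (((hG_mC.mono hC_le le_rfl).mul hζ_meas).aestronglyMeasurable) fun ω => ?_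
    show |G ω * ζ ω| ≤ max Cξ 0 * Cζ
    rw [abs_mul]
    exact mul_le_mul (hG_bdd ω) (hCζ ω) (abs_nonneg _) (le_max_right _ _)
  have step1 : MeasureTheory.condExp (MeasurableSpace.comap η (pathFiltration T E t)) ℙ (fun ω => ξ ω * ζ ω)
      =ᵐ[ℙ] MeasureTheory.condExp (MeasurableSpace.comap η (pathFiltration T E t)) ℙ (MeasureTheory.condExp (MeasurableSpace.comap η (inferInstance : MeasurableSpace C(Icc (0 : ℝ) T, E))) ℙ (fun ω => ξ ω * ζ ω)) :=
    (condExp_condExp_of_le hCB hB_le).symm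
  have step2 : MeasureTheory.condExp (MeasurableSpace.comap η (inferInstance : MeasurableSpace C(Icc (0 : ℝ) T, E))) ℙ (fun ω => ξ ω * ζ ω) =ᵐ[ℙ] fun ω => ζ ω * G ω := by
    rw [hmul1]
    have h := condExp_mul_of_stronglyMeasurable_left (μ := ℙ) (m := (MeasurableSpace.comap η (inferInstance : MeasurableSpace C(Icc (0 : ℝ) T, E)))) hζ.stronglyMeasurable
      hζξ_int hξ_int
    refine h.trans ?_
    filter_upwards [claim1] with ω hω
    show ζ ω * MeasureTheory.condExp (MeasurableSpace.comap η (inferInstance : MeasurableSpace C(Icc (0 : ℝ) T, E))) ℙ ξ ω = ζ ω * G ω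
    rw [hω]
  have step3 : MeasureTheory.condExp (MeasurableSpace.comap η (pathFiltration T E t)) ℙ (fun ω => ζ ω * G ω)
      =ᵐ[ℙ] G * MeasureTheory.condExp (MeasurableSpace.comap η (pathFiltration T E t)) ℙ ζ := by
    have hmul2 : (fun ω => ζ ω * G ω) = G * ζ := funext fun ω => mul_comm _ _
    rw [hmul2]
    exact condExp_mul_of_stronglyMeasurable_left (μ := ℙ) (m := (MeasurableSpace.comap η (pathFiltration T E t))) hG_mC.stronglyMeasurable
      hGζ_int hζ_int
  calc MeasureTheory.condExp (MeasurableSpace.comap η (pathFiltration T E t)) ℙ (fun ω => ξ ω * ζ ω)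
      =ᵐ[ℙ] MeasureTheory.condExp (MeasurableSpace.comap η (pathFiltration T E t)) ℙ (MeasureTheory.condExp (MeasurableSpace.comap η (inferInstance : MeasurableSpace C(Icc (0 : ℝ) T, E))) ℙ (fun ω => ξ ω * ζ ω)) := step1
    _ =ᵐ[ℙ] MeasureTheory.condExp (MeasurableSpace.comap η (pathFiltration T E t)) ℙ (fun ω => ζ ω * G ω) := condExp_congr_ae step2
    _ =ᵐ[ℙ] G * MeasureTheory.condExp (MeasurableSpace.comap η (pathFiltration T E t)) ℙ ζ := step3
    _ =ᵐ[ℙ] fun ω => MeasureTheory.condExp (MeasurableSpace.comap η (pathFiltration T E t)) ℙ ξ ω * MeasureTheory.condExp (MeasurableSpace.comap η (pathFiltration T E t)) ℙ ζ ω := by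
        filter_upwards [hstar] with ω hω
        show G ω * MeasureTheory.condExp (MeasurableSpace.comap η (pathFiltration T E t)) ℙ ζ ω = _
        rw [hω]


end
end

section
/- Let (Ω,𝓕,ℙ) be a probability space, 𝓖 ⊆ 𝓕 a sub-σ-algebra, η : Ω → E a random variable with values in a measurable space E, Z : Ω → S a random variable with values in a measurable space S, and ν a probability measure on S. Assume that for every bounded measurable φ : S → ℝ and every bounded 𝓖-measurable random variable h, E[ h·φ(Z) | σ(η) ] = E[ h | σ(η) ] · ∫ φ dν almost surely. Then Z has law ν and σ(Z) is independent of the σ-algebra 𝓖 ∨ σ(η) generated by 𝓖 and η. -/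
open MeasureTheory

noncomputable section

/-- If for all bounded measurable `φ` and all bounded `𝓖`-measurable `h` one has
`E[h·φ(Z) | σ(η)] = E[h | σ(η)]·∫φ dν` a.s., then `Z` has law `ν` and `σ(Z)` is
independent of `𝓖 ∨ σ(η)`. -/
theorem law_and_independence_from_conditional_factorization
    {Ω E S : Type*} [mΩ : MeasurableSpace Ω] [mE : MeasurableSpace E]
    [mS : MeasurableSpace S]
    (ℙ : Measure Ω) [IsProbabilityMeasure ℙ]
    (η : Ω → E) (hη : Measurable η)
    (Z : Ω → S) (hZ : Measurable Z)
    (ν : Measure S) [IsProbabilityMeasure ν]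
    (𝓖 : MeasurableSpace Ω) (h𝓖 : 𝓖 ≤ mΩ)
    (hfact : ∀ φ : S → ℝ, Measurable φ → (∃ C : ℝ, ∀ x, |φ x| ≤ C) →
      ∀ h : Ω → ℝ, Measurable[𝓖] h → (∃ C : ℝ, ∀ ω, |h ω| ≤ C) →
        MeasureTheory.condExp (MeasurableSpace.comap η mE) ℙ
            (fun ω => h ω * φ (Z ω)) =ᵐ[ℙ]
          fun ω => MeasureTheory.condExp (MeasurableSpace.comap η mE) ℙ h ω
            * ∫ x, φ x ∂ν) :
    @Measure.map Ω S mΩ mS Z ℙ = ν ∧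
      ProbabilityTheory.Indep (MeasurableSpace.comap Z mS)
        (𝓖 ⊔ MeasurableSpace.comap η mE) ℙ := by
  have hm : MeasurableSpace.comap η mE ≤ mΩ := hη.comap_le
  haveI : SigmaFinite (ℙ.trim hm) := IsFiniteMeasure.toSigmaFinite _
  -- the key computation
  have key : ∀ B : Set S, MeasurableSet B → ∀ G : Set Ω, MeasurableSet[𝓖] G →
      ∀ H : Set Ω, MeasurableSet[MeasurableSpace.comap η mE] H →
      ℙ (Z ⁻¹' B ∩ (G ∩ H)) = ν B * ℙ (G ∩ H) := by
    intro B hB G hG H hH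
    set φ : S → ℝ := B.indicator 1 with hφ_def
    set h : Ω → ℝ := G.indicator 1 with hh_def
    have hφm : Measurable φ := measurable_one.indicator hB
    have hφb : ∃ C : ℝ, ∀ x, |φ x| ≤ C := by
      refine ⟨1, fun x => ?_⟩
      by_cases hx : x ∈ B <;> simp [hφ_def, hx]
    have hhm : Measurable[𝓖] h := (@measurable_one ℝ Ω _ 𝓖 _).indicator hG
    have hhb : ∃ C : ℝ, ∀ ω, |h ω| ≤ C := by
      refine ⟨1, fun ω => ?_⟩
      by_cases hx : ω ∈ G <;> simp [hh_def, hx]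
    have hGm : MeasurableSet[mΩ] G := h𝓖 _ hG
    have hHm : MeasurableSet[mΩ] H := hm _ hH
    have hfun : (fun ω => h ω * φ (Z ω)) = (G ∩ Z ⁻¹' B).indicator (1 : Ω → ℝ) := by
      funext ω
      by_cases h1 : ω ∈ G <;> by_cases h2 : Z ω ∈ B <;>
        simp [hh_def, hφ_def, h1, h2, Set.indicator_apply]
    have hc : ∫ x, φ x ∂ν = (ν B).toReal := by
      rw [hφ_def, integral_indicator hB]
      simp
      rfl
    -- integrate the factorization over H
    have hfac := hfact φ hφm hφb h hhm hhb
    clear hfact hhm hG h𝓖 𝓖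
    have hint : Integrable (fun ω => h ω * φ (Z ω)) ℙ := by
      rw [hfun]
      exact (integrable_const (1 : ℝ)).indicator (hGm.inter (hZ hB))
    have hinth : Integrable h ℙ := (integrable_const (1 : ℝ)).indicator hGm
    have hL : ∫ ω in H, (condExp (MeasurableSpace.comap η mE) ℙ
          (fun ω => h ω * φ (Z ω))) ω ∂ℙ
        = ∫ ω in H, (fun ω => (condExp (MeasurableSpace.comap η mE) ℙ h) ω
          * ∫ x, φ x ∂ν) ω ∂ℙ :=
      setIntegral_congr_ae hHm (hfac.mono fun ω hω _ => hω)
    rw [setIntegral_condExp hm hint hH] at hL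
    have hR : ∫ ω in H, (fun ω => (condExp (MeasurableSpace.comap η mE) ℙ h) ω
          * ∫ x, φ x ∂ν) ω ∂ℙ
        = (∫ ω in H, (condExp (MeasurableSpace.comap η mE) ℙ h) ω ∂ℙ)
          * ∫ x, φ x ∂ν := by
      simp_rw [integral_mul_const]
    rw [hR, setIntegral_condExp hm hinth hH] at hL
    have hL1 : ∫ ω in H, h ω * φ (Z ω) ∂ℙ = (ℙ (G ∩ Z ⁻¹' B ∩ H)).toReal := by
      rw [hfun, integral_indicator (hGm.inter (hZ hB)),
        Measure.restrict_restrict (hGm.inter (hZ hB))]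
      simp
      rfl
    have hL2 : ∫ ω in H, h ω ∂ℙ = (ℙ (G ∩ H)).toReal := by
      rw [hh_def, integral_indicator hGm, Measure.restrict_restrict hGm]
      simp
      rfl
    rw [hL1, hL2, hc] at hL
    have hset : Z ⁻¹' B ∩ (G ∩ H) = G ∩ Z ⁻¹' B ∩ H := by
      ext ω; simp only [Set.mem_inter_iff]; tauto
    rw [hset]
    have hfin1 : ℙ (G ∩ Z ⁻¹' B ∩ H) ≠ ⊤ := measure_ne_top _ _
    have hfin2 : ℙ (G ∩ H) ≠ ⊤ := measure_ne_top _ _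
    have hfin3 : ν B ≠ ⊤ := measure_ne_top _ _
    rw [← ENNReal.toReal_eq_toReal_iff' hfin1 (ENNReal.mul_ne_top hfin3 hfin2),
      ENNReal.toReal_mul]
    linarith [hL]
  -- law of Z
  have hlaw : @Measure.map Ω S mΩ mS Z ℙ = ν := by
    refine Measure.ext fun B hB => ?_
    rw [Measure.map_apply hZ hB]
    have := key B hB Set.univ MeasurableSet.univ Set.univ MeasurableSet.univ
    simpa using this
  refine ⟨hlaw, ?_⟩
  -- independence via π-systems
  set p1 : Set (Set Ω) := {s | ∃ B : Set S, MeasurableSet B ∧ Z ⁻¹' B = s} with hp1_def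
  set p2 : Set (Set Ω) :=
    {s | ∃ G H : Set Ω, MeasurableSet[𝓖] G ∧
      MeasurableSet[MeasurableSpace.comap η mE] H ∧ s = G ∩ H} with hp2_def
  have hπ1 : IsPiSystem p1 := by
    rintro s ⟨B1, hB1, rfl⟩ t ⟨B2, hB2, rfl⟩ -
    exact ⟨B1 ∩ B2, hB1.inter hB2, rfl⟩
  have hπ2 : IsPiSystem p2 := by
    rintro s ⟨G1, H1, hG1, hH1, rfl⟩ t ⟨G2, H2, hG2, hH2, rfl⟩ -
    refine ⟨G1 ∩ G2, H1 ∩ H2, hG1.inter hG2, hH1.inter hH2, ?_⟩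
    ext ω; simp only [Set.mem_inter_iff]; tauto
  have hgen1 : MeasurableSpace.comap Z mS = MeasurableSpace.generateFrom p1 := by
    refine le_antisymm ?_ (MeasurableSpace.generateFrom_le ?_)
    · rintro s ⟨B, hB, rfl⟩
      exact MeasurableSpace.measurableSet_generateFrom ⟨B, hB, rfl⟩
    · rintro s ⟨B, hB, rfl⟩
      exact ⟨B, hB, rfl⟩
  have hgen2 : 𝓖 ⊔ MeasurableSpace.comap η mE = MeasurableSpace.generateFrom p2 := by
    refine le_antisymm (sup_le ?_ ?_) (MeasurableSpace.generateFrom_le ?_)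
    · intro s hs
      exact MeasurableSpace.measurableSet_generateFrom
        ⟨s, Set.univ, hs, MeasurableSet.univ, by simp⟩
    · intro s hs
      exact MeasurableSpace.measurableSet_generateFrom
        ⟨Set.univ, s, MeasurableSet.univ, hs, by simp⟩
    · rintro s ⟨G, H, hG, hH, rfl⟩
      exact MeasurableSet.inter
        (le_sup_left (a := 𝓖) (b := MeasurableSpace.comap η mE) G hG)
        (le_sup_right (a := 𝓖) (b := MeasurableSpace.comap η mE) H hH)
  refine ProbabilityTheory.IndepSets.indep hZ.comap_le (sup_le h𝓖 hm) hπ1 hπ2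
    hgen1 hgen2 ?_
  rw [ProbabilityTheory.IndepSets_iff]
  rintro s t ⟨B, hB, rfl⟩ ⟨G, H, hG, hH, rfl⟩
  rw [key B hB G hG H hH, ← hlaw, Measure.map_apply hZ hB]

end
end

section
/- Let (Ω,𝓕,ℙ) be a probability space, S a Polish space with its Borel σ-algebra, U, V : Ω → S random variables, and 𝓖 ⊆ 𝓕 a sub-σ-algebra. Suppose σ(U) and σ(V) are conditionally independent given 𝓖, and U = V almost surely. Then there exists a 𝓖-measurable random variable Ũ : Ω → S with U = Ũ almost surely. -/
open MeasureTheory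

noncomputable section

/-- If `σ(U)` and `σ(V)` are conditionally independent given `𝓖` and `U = V` a.s., then
`U` agrees a.s. with some `𝓖`-measurable random variable. -/
theorem ae_measurable_of_condIndep_of_ae_eq
    {Ω : Type*} [mΩ : MeasurableSpace Ω] (ℙ : Measure Ω) [IsProbabilityMeasure ℙ]
    {S : Type*} [TopologicalSpace S] [PolishSpace S] [mS : MeasurableSpace S]
    [BorelSpace S]
    (U V : Ω → S) (hU : Measurable U) (hV : Measurable V)
    (𝓖 : MeasurableSpace Ω) (h𝓖 : 𝓖 ≤ mΩ)
    (hci : @CondIndepSigmaAlgebras Ω mΩ ℙ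
      (MeasurableSpace.comap U mS) (MeasurableSpace.comap V mS) 𝓖)
    (hae : U =ᵐ[ℙ] V) :
    ∃ Utilde : Ω → S, Measurable[𝓖] Utilde ∧ U =ᵐ[ℙ] Utilde := by
  classical
  by_cases hS : Nonempty S
  swap
  · have hSe : IsEmpty S := not_nonempty_iff.mp hS
    have hΩe : IsEmpty Ω := ⟨fun ω => hSe.false (U ω)⟩
    exact ⟨U, @measurable_of_empty Ω S 𝓖 mS hΩe U, Filter.EventuallyEq.rfl⟩
  -- embed S into ℝ via a bounded measurable embedding
  obtain ⟨e, he⟩ := MeasureTheory.exists_measurableEmbedding_real S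
  set φ : S → ℝ := fun s => Real.arctan (e s) with hφdef
  have hφm : Measurable φ := Real.measurable_arctan.comp he.measurable
  have hφinj : Function.Injective φ :=
    fun a b h => he.injective (Real.arctan_injective h)
  have hφ : MeasurableEmbedding φ := hφm.measurableEmbedding hφinj
  obtain ⟨ψ, hψm, hψφ⟩ := hφ.exists_measurable_extend measurable_id (fun _ => hS)
  have hbound : ∀ s, |φ s| ≤ Real.pi / 2 := fun s => by
    rw [abs_le]
    exact ⟨(Real.neg_pi_div_two_lt_arctan _).le, (Real.arctan_lt_pi_div_two _).le⟩
  set f : Ω → ℝ := fun ω => φ (U ω) with hfdef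
  set g : Ω → ℝ := fun ω => φ (V ω) with hgdef
  have hfm : Measurable[mΩ] f := hφm.comp hU
  have hfmU : Measurable[MeasurableSpace.comap U mS] f := fun s hs => ⟨φ ⁻¹' s, hφm hs, rfl⟩
  have hgmV : Measurable[MeasurableSpace.comap V mS] g := fun s hs => ⟨φ ⁻¹' s, hφm hs, rfl⟩
  have hfg : f =ᵐ[ℙ] g := hae.mono fun ω h => by simp only [hfdef, hgdef, h]
  have hkey := hci f g hfmU hgmV ⟨Real.pi / 2, fun ω => hbound _⟩ ⟨Real.pi / 2, fun ω => hbound _⟩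
  set m : Ω → ℝ := MeasureTheory.condExp 𝓖 ℙ f with hmdef
  have hmsm : StronglyMeasurable[𝓖] m := stronglyMeasurable_condExp
  have hmmeas : Measurable[𝓖] m := hmsm.measurable
  -- integrability facts
  have hfint : Integrable f ℙ := by
    refine memLp_one_iff_integrable.mp ?_
    exact MemLp.of_bound (μ := ℙ) hfm.aestronglyMeasurable (Real.pi / 2)
      (Filter.Eventually.of_forall fun ω => by
        simpa [Real.norm_eq_abs] using hbound (U ω))
  have hmbdd : ∀ᵐ ω ∂ℙ, |m ω| ≤ ((Real.pi / 2).toNNReal : ℝ) := by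
    refine ae_bdd_condExp_of_ae_bdd (Filter.Eventually.of_forall fun ω => ?_)
    have := hbound (U ω)
    rwa [Real.coe_toNNReal _ (by positivity)]
  have hmbdd' : ∀ᵐ ω ∂ℙ, |m ω| ≤ Real.pi / 2 := by
    filter_upwards [hmbdd] with ω h
    rwa [Real.coe_toNNReal _ (by positivity)] at h
  have hmsm' : StronglyMeasurable[mΩ] m := hmsm.mono h𝓖
  have hmint2 : Integrable (fun ω => m ω * m ω) ℙ := by
    refine memLp_one_iff_integrable.mp ?_
    refine MemLp.of_bound (μ := ℙ) (hmsm'.mul hmsm').aestronglyMeasurable ((Real.pi / 2) * (Real.pi / 2)) ?_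
    filter_upwards [hmbdd'] with ω h
    rw [Real.norm_eq_abs, abs_mul]
    exact mul_le_mul h h (abs_nonneg _) (by positivity)
  have hfmint : Integrable (fun ω => m ω * f ω) ℙ := by
    refine memLp_one_iff_integrable.mp ?_
    refine MemLp.of_bound (μ := ℙ) (hmsm'.mul hfm.stronglyMeasurable).aestronglyMeasurable
      ((Real.pi / 2) * (Real.pi / 2)) ?_
    filter_upwards [hmbdd'] with ω h
    rw [Real.norm_eq_abs, abs_mul]
    exact mul_le_mul h (hbound _) (abs_nonneg _) (by positivity)
  have hffint : Integrable (fun ω => f ω * f ω) ℙ := by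
    refine memLp_one_iff_integrable.mp ?_
    refine MemLp.of_bound (μ := ℙ) (hfm.stronglyMeasurable.mul hfm.stronglyMeasurable).aestronglyMeasurable
      ((Real.pi / 2) * (Real.pi / 2)) ?_
    refine Filter.Eventually.of_forall fun ω => ?_
    rw [Real.norm_eq_abs, abs_mul]
    exact mul_le_mul (hbound _) (hbound _) (abs_nonneg _) (by positivity)
  -- E[f² | 𝓖] = m²
  have h1 : MeasureTheory.condExp 𝓖 ℙ (fun ω => f ω * f ω) =ᵐ[ℙ] fun ω => m ω * m ω := by
    have e1 : MeasureTheory.condExp 𝓖 ℙ (fun ω => f ω * f ω)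
        =ᵐ[ℙ] MeasureTheory.condExp 𝓖 ℙ (fun ω => f ω * g ω) :=
      condExp_congr_ae (hfg.mono fun ω h => by simp only [h])
    have e2 : MeasureTheory.condExp 𝓖 ℙ g =ᵐ[ℙ] m := (condExp_congr_ae hfg).symm
    refine e1.trans (hkey.trans ?_)
    filter_upwards [e2] with ω h
    rw [h]
  -- E[m·f | 𝓖] = m²
  have h2 : MeasureTheory.condExp 𝓖 ℙ (fun ω => m ω * f ω) =ᵐ[ℙ] fun ω => m ω * m ω := by
    have := condExp_mul_of_stronglyMeasurable_left (μ := ℙ) (m := 𝓖) hmsm hfmint hfint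
    exact this
  -- integral computations
  have hiff : ∫ ω, f ω * f ω ∂ℙ = ∫ ω, m ω * m ω ∂ℙ := by
    rw [← integral_condExp h𝓖 (f := fun ω => f ω * f ω)]
    exact integral_congr_ae h1
  have himf : ∫ ω, m ω * f ω ∂ℙ = ∫ ω, m ω * m ω ∂ℙ := by
    rw [← integral_condExp h𝓖 (f := fun ω => m ω * f ω)]
    exact integral_congr_ae h2
  have hsqint : Integrable (fun ω => (f ω - m ω) * (f ω - m ω)) ℙ := by
    have : (fun ω => (f ω - m ω) * (f ω - m ω))
        = fun ω => f ω * f ω - m ω * f ω - (f ω * m ω - m ω * m ω) := by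
      funext ω; ring
    rw [this]
    refine Integrable.sub (hffint.sub hfmint) (Integrable.sub ?_ hmint2)
    simpa [mul_comm] using hfmint
  have hzero : ∫ ω, (f ω - m ω) * (f ω - m ω) ∂ℙ = 0 := by
    have expand : (fun ω => (f ω - m ω) * (f ω - m ω))
        = fun ω => f ω * f ω - m ω * f ω - (f ω * m ω - m ω * m ω) := by
      funext ω; ring
    have hfmint' : Integrable (fun ω => f ω * m ω) ℙ := by simpa [mul_comm] using hfmint
    have hA : Integrable (fun ω => f ω * f ω - m ω * f ω) ℙ := hffint.sub hfmint
    have hB : Integrable (fun ω => f ω * m ω - m ω * m ω) ℙ := hfmint'.sub hmint2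
    rw [expand, integral_sub hA hB,
      integral_sub hffint hfmint, integral_sub hfmint' hmint2, hiff, himf]
    have : ∫ ω, f ω * m ω ∂ℙ = ∫ ω, m ω * f ω ∂ℙ := by
      congr 1; funext ω; ring
    rw [this, himf]
    ring
  have hfaem : f =ᵐ[ℙ] m := by
    have hnn : 0 ≤ᵐ[ℙ] fun ω => (f ω - m ω) * (f ω - m ω) :=
      Filter.Eventually.of_forall fun ω => mul_self_nonneg _
    have := (integral_eq_zero_iff_of_nonneg_ae hnn hsqint).mp hzero
    filter_upwards [this] with ω h
    have : (f ω - m ω) * (f ω - m ω) = 0 := h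
    have := mul_self_eq_zero.mp this
    linarith
  refine ⟨ψ ∘ m, hψm.comp hmmeas, ?_⟩
  filter_upwards [hfaem] with ω h
  have : ψ (φ (U ω)) = U ω := congrFun hψφ (U ω)
  rw [Function.comp_apply, ← h]
  exact this.symm
end
end
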